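/- Let n ≥ 1 and suppose f is a continuous probability density on ℝ that is strictly positive on its support, so that F is a continuous strictly increasing bijection from the support onto (0,1); assume all entropy integrals below exist and are finite. Then the difference between the Shannon entropy of a perfect RSS and of an SRS of size n is distribution-free: Σ_{i=1}^n H(f_(i)) − n·H(f) = Σ_{i=1}^n H(U_(i)), where H(U_(i)) = -∫_0^1 b_i(u)·log b_i(u) du is the entropy of the Beta(i, n-i+1) density b_i(u) = i·C(n,i)·u^{i-1}·(1-u)^{n-i}. -/

import Mathlib

open MeasureTheory Real

/-- Cumulative distribution function of a density `f`. -/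
noncomputable def cdfOf (f : ℝ → ℝ) (x : ℝ) : ℝ := ∫ t in Set.Iic x, f t

/-- Density of the `i`-th order statistic from a sample of size `n` with parent density `f`. -/
noncomputable def osDen (f : ℝ → ℝ) (n i : ℕ) (x : ℝ) : ℝ :=
  (i : ℝ) * (n.choose i : ℝ) * (cdfOf f x) ^ (i - 1) * (1 - cdfOf f x) ^ (n - i) * f x

/-- Shannon entropy of a density `g`. -/
noncomputable def shannonH (g : ℝ → ℝ) : ℝ := -∫ x, g x * Real.log (g x)

/-- Beta(i, n-i+1) density: `b_i(u) = i·C(n,i)·u^(i-1)·(1-u)^(n-i)`. -/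
noncomputable def betaDen (n i : ℕ) (u : ℝ) : ℝ :=
  (i : ℝ) * (n.choose i : ℝ) * u ^ (i - 1) * (1 - u) ^ (n - i)

/-- The sum of the Beta(i, n-i+1) densities over `i = 1..n` is constantly `n`. -/
lemma betaDen_sum (n : ℕ) (hn : 1 ≤ n) (u : ℝ) :
    ∑ i ∈ Finset.Icc 1 n, betaDen n i u = n := by
  obtain ⟨m, rfl⟩ : ∃ m, n = m + 1 := ⟨n - 1, (Nat.succ_pred_eq_of_pos hn).symm⟩
  rw [← Finset.Ico_add_one_right_eq_Icc, Finset.sum_Ico_eq_sum_range]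
  simp only [Nat.add_sub_cancel]
  have hterm : ∀ j ∈ Finset.range (m + 1),
      betaDen (m + 1) (1 + j) u
        = ((m : ℝ) + 1) * (u ^ j * (1 - u) ^ (m - j) * (m.choose j : ℝ)) := by
    intro j hj
    have hc : ((1 + j : ℕ) : ℝ) * (((m + 1).choose (1 + j) : ℕ) : ℝ)
        = ((m : ℝ) + 1) * (m.choose j : ℝ) := by
      have := Nat.add_one_mul_choose_eq m j
      have h2 : (1 + j) * (m + 1).choose (1 + j) = (m + 1) * m.choose j := by
        rw [add_comm 1 j]
        exact (mul_comm _ _).trans (Nat.add_one_mul_choose_eq m j).symm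
      exact_mod_cast congrArg (fun k : ℕ => (k : ℝ)) h2
    have he1 : 1 + j - 1 = j := by omega
    have he2 : m + 1 - (1 + j) = m - j := by omega
    unfold betaDen
    rw [he1, he2, hc]
    ring
  rw [Finset.sum_congr rfl hterm, ← Finset.mul_sum]
  have key : ((u + (1 - u)) : ℝ) ^ m = 1 := by norm_num
  rw [add_pow] at key
  rw [key]
  push_cast
  ring

theorem shannon_entropy_difference_distribution_free (n : ℕ) (hn : 1 ≤ n) (f : ℝ → ℝ)
    (hf_cont : Continuous f) (hf_nonneg : ∀ x, 0 ≤ f x)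
    (hf_int : ∫ x, f x = 1)
    (hf_pos : ∀ x ∈ Function.support f, 0 < f x)
    (hF_mono : StrictMonoOn (cdfOf f) (Function.support f))
    (hF_bij : Set.BijOn (cdfOf f) (Function.support f) (Set.Ioo 0 1))
    (hfl : Integrable (fun x => f x * Real.log (f x)))
    (hil : ∀ i ∈ Finset.Icc 1 n,
      Integrable (fun x => osDen f n i x * Real.log (osDen f n i x)))
    (hbl : ∀ i ∈ Finset.Icc 1 n,
      IntegrableOn (fun u => betaDen n i u * Real.log (betaDen n i u)) (Set.Ioo 0 1)) :
    (∑ i ∈ Finset.Icc 1 n, shannonH (osDen f n i)) - (n : ℝ) * shannonH f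
      = ∑ i ∈ Finset.Icc 1 n,
          -(∫ u in Set.Ioo (0:ℝ) 1, betaDen n i u * Real.log (betaDen n i u)) := by
  have hSopen : IsOpen (Function.support f) := hf_cont.isOpen_support
  have hSmeas : MeasurableSet (Function.support f) := hSopen.measurableSet
  -- f is integrable
  have hfInt : Integrable f := by
    by_contra h
    rw [integral_undef h] at hf_int
    norm_num at hf_int
  -- the CDF has derivative f everywhere
  have hFderiv : ∀ x : ℝ, HasDerivAt (cdfOf f) (f x) x := by
    intro x
    have h2 : HasDerivAt (fun y => cdfOf f 0 + ∫ t in (0:ℝ)..y, f t) (f x) x := by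
      have hd : HasDerivAt (fun u => ∫ t in (0:ℝ)..u, f t) (f x) x :=
        intervalIntegral.integral_hasDerivAt_right
        hfInt.intervalIntegrable
        (hf_cont.stronglyMeasurableAtFilter _ _)
        hf_cont.continuousAt
      simpa using hd
    have heq : (fun y => cdfOf f 0 + ∫ t in (0:ℝ)..y, f t) = cdfOf f := by
      funext y
      rw [← intervalIntegral.integral_Iic_sub_Iic hfInt.integrableOn hfInt.integrableOn]
      unfold cdfOf
      ring
    rwa [heq] at h2
  have hFcont : Continuous (cdfOf f) :=
    continuous_iff_continuousAt.mpr fun x => (hFderiv x).continuousAt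
  -- the CDF takes values in [0,1]
  have hF0 : ∀ x, 0 ≤ cdfOf f x := fun x =>
    setIntegral_nonneg measurableSet_Iic fun t _ => hf_nonneg t
  have hF1 : ∀ x, cdfOf f x ≤ 1 := by
    intro x
    rw [← hf_int]
    exact setIntegral_le_integral hfInt (ae_of_all _ hf_nonneg)
  -- nonnegativity and boundedness of betaDen on [0,1]
  have hbnn : ∀ (i : ℕ) (u : ℝ), 0 ≤ u → u ≤ 1 → 0 ≤ betaDen n i u := by
    intro i u h0 h1
    unfold betaDen
    have : (0:ℝ) ≤ 1 - u := by linarith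
    positivity
  have hbb : ∀ i ∈ Finset.Icc 1 n, ∀ u : ℝ, 0 ≤ u → u ≤ 1 → betaDen n i u ≤ n := by
    intro i hi u h0 h1
    calc betaDen n i u ≤ ∑ j ∈ Finset.Icc 1 n, betaDen n j u :=
          Finset.single_le_sum (fun j _ => hbnn j u h0 h1) hi
      _ = n := betaDen_sum n hn u
  -- key pointwise decomposition
  have hkey : ∀ (i : ℕ) (x : ℝ), osDen f n i x * Real.log (osDen f n i x)
      = f x * (betaDen n i (cdfOf f x) * Real.log (betaDen n i (cdfOf f x)))
        + betaDen n i (cdfOf f x) * (f x * Real.log (f x)) := by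
    intro i x
    have hos : osDen f n i x = betaDen n i (cdfOf f x) * f x := by
      unfold osDen betaDen; ring
    rw [hos]
    rcases eq_or_ne (f x) 0 with h | h
    · simp [h]
    rcases eq_or_ne (betaDen n i (cdfOf f x)) 0 with hb | hb
    · simp [hb]
    rw [Real.log_mul hb h]
    ring
  -- change of variables u = F(x)
  have hsub : ∀ g : ℝ → ℝ, ∫ u in Set.Ioo (0:ℝ) 1, g u
      = ∫ x in Function.support f, f x * g (cdfOf f x) := by
    intro g
    rw [← hF_bij.image_eq,
      integral_image_eq_integral_abs_deriv_smul hSmeas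
        (fun x _ => (hFderiv x).hasDerivWithinAt) hF_bij.injOn g]
    refine setIntegral_congr_fun hSmeas fun x _ => ?_
    rw [abs_of_nonneg (hf_nonneg x), smul_eq_mul]
  -- integrability of the pieces
  have hBcont : ∀ i : ℕ, Continuous (fun u : ℝ => betaDen n i u) := by
    intro i
    unfold betaDen
    fun_prop
  have hti : ∀ i ∈ Finset.Icc 1 n,
      Integrable (fun x => betaDen n i (cdfOf f x) * (f x * Real.log (f x))) := by
    intro i hi
    refine Integrable.bdd_mul hfl ((hBcont i).comp hFcont).aestronglyMeasurable (c := n) (ae_of_all _ fun x => ?_)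
    have h0 := hbnn i (cdfOf f x) (hF0 x) (hF1 x)
    have h1 := hbb i hi (cdfOf f x) (hF0 x) (hF1 x)
    rw [Real.norm_eq_abs, abs_of_nonneg h0]
    exact h1
  have hui : ∀ i ∈ Finset.Icc 1 n,
      Integrable (fun x =>
        f x * (betaDen n i (cdfOf f x) * Real.log (betaDen n i (cdfOf f x)))) := by
    intro i hi
    refine ((hil i hi).sub (hti i hi)).congr (ae_of_all _ fun x => ?_)
    simp only [Pi.sub_apply]
    rw [hkey i x]
    ring
  -- the u-piece integral over ℝ equals the Beta-entropy integral
  have hup : ∀ i : ℕ,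
      ∫ x, f x * (betaDen n i (cdfOf f x) * Real.log (betaDen n i (cdfOf f x)))
        = ∫ u in Set.Ioo (0:ℝ) 1, betaDen n i u * Real.log (betaDen n i u) := by
    intro i
    rw [hsub fun u => betaDen n i u * Real.log (betaDen n i u),
      ← setIntegral_eq_integral_of_forall_compl_eq_zero
        (s := Function.support f)
        (f := fun x => f x * (betaDen n i (cdfOf f x) * Real.log (betaDen n i (cdfOf f x))))]
    intro x hx
    rw [Function.notMem_support.mp hx]
    ring
  -- split each order-statistic entropy
  have hsplit : ∀ i ∈ Finset.Icc 1 n,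
      ∫ x, osDen f n i x * Real.log (osDen f n i x)
        = (∫ u in Set.Ioo (0:ℝ) 1, betaDen n i u * Real.log (betaDen n i u))
          + ∫ x, betaDen n i (cdfOf f x) * (f x * Real.log (f x)) := by
    intro i hi
    rw [← hup i, ← integral_add (hui i hi) (hti i hi)]
    exact integral_congr_ae (ae_of_all _ fun x => hkey i x)
  -- sum of the t-pieces is n ∫ f log f
  have htsum : ∑ i ∈ Finset.Icc 1 n,
      ∫ x, betaDen n i (cdfOf f x) * (f x * Real.log (f x))
        = (n : ℝ) * ∫ x, f x * Real.log (f x) := by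
    rw [← integral_finset_sum _ hti]
    rw [← integral_const_mul]
    refine integral_congr_ae (ae_of_all _ fun x => ?_)
    show ∑ i ∈ Finset.Icc 1 n, betaDen n i (cdfOf f x) * (f x * Real.log (f x))
        = (n : ℝ) * (f x * Real.log (f x))
    rw [← Finset.sum_mul, betaDen_sum n hn (cdfOf f x)]
  -- put everything together
  unfold shannonH
  have : ∑ i ∈ Finset.Icc 1 n, -∫ x, osDen f n i x * Real.log (osDen f n i x)
      = (∑ i ∈ Finset.Icc 1 n,
          -(∫ u in Set.Ioo (0:ℝ) 1, betaDen n i u * Real.log (betaDen n i u)))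
        - (n : ℝ) * ∫ x, f x * Real.log (f x) := by
    rw [← htsum, ← Finset.sum_sub_distrib]
    refine Finset.sum_congr rfl fun i hi => ?_
    rw [hsplit i hi]
    ring
  rw [this]
  ring
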